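/- Let f_1, ..., f_M : ℝ^d → ℝ with f_m(x) = E_{z∼D_m}[f_m(x,z)], each f_m(·,z) almost surely L-smooth and μ-strongly convex (μ ≥ 0), let f = (1/M) Σ_m f_m with minimizer x_*, and let M ≥ 2. Let x^1, ..., x^M ∈ ℝ^d with average x̂ and V = (1/M) Σ_m ‖x^m - x̂‖², let g = (1/M) Σ_m ∇f_m(x^m, z_m) with z_1, ..., z_M independent, z_m ∼ D_m, and let γ ≥ 0. Then E‖x̂ - γg - x_*‖² ≤ (1 - γμ)‖x̂ - x_*‖² + γL(1 + 2γL)V - 2γ(1 - 4γL)D_f(x̂, x_*) + 4γ²σ_dif²/M; in particular, if γ ≤ 1/(8L) then E‖x̂ - γg - x_*‖² ≤ (1 - γμ)‖x̂ - x_*‖² + (5/4)γL·V - (γ/2)D_f(x̂, x_*) + 4γ²σ_dif²/M. Here D_f(x,y) = f(x) - f(y) - ⟨∇f(y), x - y⟩ and σ_dif² = (1/M) Σ_m E_{z_m∼D_m}‖∇f_m(x_*, z_m)‖². -/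

import Mathlib

open MeasureTheory ProbabilityTheory Finset
open scoped InnerProductSpace

/-- `f : ℝ^d → ℝ` is `L`-smooth and `μ`-strongly convex (`μ = 0` meaning merely convex),
witnessed by the gradient map `df`:
`(μ/2)‖x - y‖² ≤ f x - f y - ⟪df y, x - y⟫ ≤ (L/2)‖x - y‖²` for all `x, y`. -/
def SmoothSC {d : ℕ} (L μ : ℝ) (f : EuclideanSpace ℝ (Fin d) → ℝ)
    (df : EuclideanSpace ℝ (Fin d) → EuclideanSpace ℝ (Fin d)) : Prop :=
  ∀ x y : EuclideanSpace ℝ (Fin d),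
    μ / 2 * ‖x - y‖ ^ 2 ≤ f x - f y - ⟪df y, x - y⟫_ℝ ∧
    f x - f y - ⟪df y, x - y⟫_ℝ ≤ L / 2 * ‖x - y‖ ^ 2

/-- The Bregman divergence `D_f(x, y) = f x - f y - ⟪∇f y, x - y⟫` of `f`,
with gradient map `df`. -/
noncomputable def Breg {d : ℕ} (f : EuclideanSpace ℝ (Fin d) → ℝ)
    (df : EuclideanSpace ℝ (Fin d) → EuclideanSpace ℝ (Fin d))
    (x y : EuclideanSpace ℝ (Fin d)) : ℝ :=
  f x - f y - ⟪df y, x - y⟫_ℝ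

/- ===================== auxiliary lemmas ===================== -/

lemma sqnorm_sub_le' {E : Type*} [SeminormedAddCommGroup E] (u v : E) :
    ‖u - v‖ ^ 2 ≤ 2 * ‖u‖ ^ 2 + 2 * ‖v‖ ^ 2 := by
  have h := norm_sub_le u v
  nlinarith [norm_nonneg u, norm_nonneg v, norm_nonneg (u - v), sq_nonneg (‖u‖ - ‖v‖)]

lemma avg_norm_sq_le' {E : Type*} [NormedAddCommGroup E] [NormedSpace ℝ E] {M : ℕ}
    (v : Fin M → E) :
    ‖(M : ℝ)⁻¹ • ∑ m, v m‖ ^ 2 ≤ (M : ℝ)⁻¹ * ∑ m, ‖v m‖ ^ 2 := by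
  rcases Nat.eq_zero_or_pos M with h | h
  · subst h; simp
  have hM : (0:ℝ) < M := by exact_mod_cast h
  have h1 : ‖∑ m, v m‖ ≤ ∑ m, ‖v m‖ := norm_sum_le _ _
  have h2 : (∑ m, ‖v m‖) ^ 2 ≤ (M : ℝ) * ∑ m, ‖v m‖ ^ 2 := by
    simpa [Finset.card_univ] using
      sq_sum_le_card_mul_sum_sq (s := (univ : Finset (Fin M))) (f := fun m => ‖v m‖)
  have h3 : ‖∑ m, v m‖ ^ 2 ≤ (M : ℝ) * ∑ m, ‖v m‖ ^ 2 := by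
    nlinarith [norm_nonneg (∑ m, v m)]
  have h4 : ‖(M : ℝ)⁻¹ • ∑ m, v m‖ ^ 2 = (M:ℝ)⁻¹ ^ 2 * ‖∑ m, v m‖ ^ 2 := by
    rw [norm_smul, Real.norm_eq_abs, abs_of_pos (inv_pos.2 hM)]; ring
  rw [h4]
  calc (M:ℝ)⁻¹ ^ 2 * ‖∑ m, v m‖ ^ 2 ≤ (M:ℝ)⁻¹ ^ 2 * ((M:ℝ) * ∑ m, ‖v m‖ ^ 2) := by
        apply mul_le_mul_of_nonneg_left h3 (by positivity)
    _ = (M : ℝ)⁻¹ * ∑ m, ‖v m‖ ^ 2 := by field_simp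

lemma SmoothSC.coco {d : ℕ} {L μ : ℝ} {f : EuclideanSpace ℝ (Fin d) → ℝ}
    {df : EuclideanSpace ℝ (Fin d) → EuclideanSpace ℝ (Fin d)}
    (h : SmoothSC L μ f df) (hL : 0 < L) (hμ : 0 ≤ μ) (x y : EuclideanSpace ℝ (Fin d)) :
    ‖df x - df y‖ ^ 2 ≤ 2 * L * (f x - f y - ⟪df y, x - y⟫_ℝ) := by
  set u := df x - df y with hu
  set x' := x - L⁻¹ • u with hx'
  have hA := (h x' x).2
  have hB := (h x' y).1
  have hxx : x' - x = -(L⁻¹ • u) := by rw [hx']; abel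
  have hns : ‖x' - x‖ ^ 2 = L⁻¹ ^ 2 * ‖u‖ ^ 2 := by
    rw [hxx, norm_neg, norm_smul, Real.norm_eq_abs, abs_of_pos (inv_pos.2 hL)]; ring
  have hiA : ⟪df x, x' - x⟫_ℝ = -(L⁻¹ * ⟪df x, u⟫_ℝ) := by
    rw [hxx, inner_neg_right, real_inner_smul_right]
  have hiB : ⟪df y, x' - y⟫_ℝ = ⟪df y, x - y⟫_ℝ - L⁻¹ * ⟪df y, u⟫_ℝ := by
    have : x' - y = (x - y) - L⁻¹ • u := by rw [hx']; abel
    rw [this, inner_sub_right, real_inner_smul_right]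
  have hself : L⁻¹ * ⟪df x, u⟫_ℝ - L⁻¹ * ⟪df y, u⟫_ℝ = L⁻¹ * ‖u‖ ^ 2 := by
    rw [← mul_sub, ← inner_sub_left, ← hu, real_inner_self_eq_norm_sq]
  have hμ2 : 0 ≤ μ / 2 * ‖x' - y‖ ^ 2 := by positivity
  rw [hns, hiA] at hA
  rw [hiB] at hB
  have hcomb : L⁻¹ * ‖u‖ ^ 2 - L / 2 * (L⁻¹ ^ 2 * ‖u‖ ^ 2) ≤ f x - f y - ⟪df y, x - y⟫_ℝ := by
    linarith
  have hval : 2 * L * (L⁻¹ * ‖u‖ ^ 2 - L / 2 * (L⁻¹ ^ 2 * ‖u‖ ^ 2)) = ‖u‖ ^ 2 := by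
    field_simp; ring
  calc ‖u‖ ^ 2 = 2 * L * (L⁻¹ * ‖u‖ ^ 2 - L / 2 * (L⁻¹ ^ 2 * ‖u‖ ^ 2)) := hval.symm
    _ ≤ 2 * L * (f x - f y - ⟪df y, x - y⟫_ℝ) :=
        mul_le_mul_of_nonneg_left hcomb (by positivity)

lemma SmoothSC.lip_sq {d : ℕ} {L μ : ℝ} {f : EuclideanSpace ℝ (Fin d) → ℝ}
    {df : EuclideanSpace ℝ (Fin d) → EuclideanSpace ℝ (Fin d)}
    (h : SmoothSC L μ f df) (hL : 0 < L) (hμ : 0 ≤ μ) (x y : EuclideanSpace ℝ (Fin d)) :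
    ‖df x - df y‖ ^ 2 ≤ L ^ 2 * ‖x - y‖ ^ 2 := by
  have h1 := h.coco hL hμ x y
  have h2 := (h x y).2
  nlinarith [hL.le]

lemma SmoothSC.grad_min {d : ℕ} {L μ : ℝ} {f : EuclideanSpace ℝ (Fin d) → ℝ}
    {df : EuclideanSpace ℝ (Fin d) → EuclideanSpace ℝ (Fin d)}
    (h : SmoothSC L μ f df) (hL : 0 < L) {xs : EuclideanSpace ℝ (Fin d)}
    (hmin : ∀ y, f xs ≤ f y) : df xs = 0 := by
  set g := df xs with hg
  set y := xs - L⁻¹ • g with hy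
  have hA := (h y xs).2
  have hyx : y - xs = -(L⁻¹ • g) := by rw [hy]; abel
  have hns : ‖y - xs‖ ^ 2 = L⁻¹ ^ 2 * ‖g‖ ^ 2 := by
    rw [hyx, norm_neg, norm_smul, Real.norm_eq_abs, abs_of_pos (inv_pos.2 hL)]; ring
  have hi : ⟪df xs, y - xs⟫_ℝ = -(L⁻¹ * ‖g‖ ^ 2) := by
    rw [hyx, inner_neg_right, real_inner_smul_right, ← hg, real_inner_self_eq_norm_sq]
  rw [hns, hi] at hA
  have h0 := hmin y
  have hval : -(L⁻¹ * ‖g‖ ^ 2) + L / 2 * (L⁻¹ ^ 2 * ‖g‖ ^ 2) = -(‖g‖ ^ 2 / (2 * L)) := by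
    field_simp; ring
  have hle : ‖g‖ ^ 2 / (2 * L) ≤ 0 := by linarith
  have h2L : 0 < 2 * L := by linarith
  have hg2 : ‖g‖ ^ 2 ≤ 0 := by
    by_contra hc
    push_neg at hc
    exact absurd hle (not_le.2 (div_pos hc h2L))
  have : ‖g‖ = 0 := by nlinarith [norm_nonneg g]
  simpa [hg] using norm_eq_zero.mp this

lemma coord_abs_le_norm' {d : ℕ} (v : EuclideanSpace ℝ (Fin d)) (i : Fin d) : |v i| ≤ ‖v‖ := by
  rw [EuclideanSpace.norm_eq]
  have h1 : |v i| = Real.sqrt (‖v i‖ ^ 2) := by rw [Real.sqrt_sq_eq_abs]; simp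
  rw [h1]
  apply Real.sqrt_le_sqrt
  exact Finset.single_le_sum (f := fun j => ‖v j‖ ^ 2) (fun j _ => by positivity) (mem_univ i)

lemma map_integral_eq' {Z Ω : Type*} [MeasurableSpace Z] [MeasurableSpace Ω]
    {E : Type*} [NormedAddCommGroup E] [NormedSpace ℝ E] [MeasurableSpace E] [BorelSpace E]
    [SecondCountableTopology E] (P : Measure Ω) (Dm : Measure Z) (ζ : Ω → Z)
    (hζ : Measurable ζ) (hlaw : P.map ζ = Dm) (φ : Z → E) (hφ : Measurable φ) :
    ∫ ω, φ (ζ ω) ∂P = ∫ w, φ w ∂Dm := by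
  rw [← hlaw]
  exact (integral_map hζ.aemeasurable hφ.stronglyMeasurable.aestronglyMeasurable).symm

lemma map_integrable' {Z Ω : Type*} [MeasurableSpace Z] [MeasurableSpace Ω]
    {E : Type*} [NormedAddCommGroup E] [NormedSpace ℝ E] [MeasurableSpace E] [BorelSpace E]
    [SecondCountableTopology E] (P : Measure Ω) (Dm : Measure Z) (ζ : Ω → Z)
    (hζ : Measurable ζ) (hlaw : P.map ζ = Dm) (φ : Z → E) (hφ : Measurable φ)
    (h : Integrable φ Dm) : Integrable (fun ω => φ (ζ ω)) P := by
  rw [← hlaw] at h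
  exact
    (integrable_map_measure hφ.stronglyMeasurable.aestronglyMeasurable hζ.aemeasurable).mp h

set_option maxHeartbeats 1000000 in
/-- one-step recursion for the optimality gap, heterogeneous data. -/
theorem optimality_gap_single_recursion_heterogeneous {d M : ℕ} (hM : 2 ≤ M) (L : ℝ) (hL : 0 < L) (μ : ℝ) (hμ : 0 ≤ μ)
    {Z : Type*} [MeasurableSpace Z] {Ω : Type*} [MeasurableSpace Ω]
    (P : Measure Ω) [IsProbabilityMeasure P]
    (D : Fin M → Measure Z) (hD : ∀ m, IsProbabilityMeasure (D m))
    (FM : Fin M → EuclideanSpace ℝ (Fin d) → Z → ℝ) (dFM : Fin M → EuclideanSpace ℝ (Fin d) → Z → EuclideanSpace ℝ (Fin d))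
    (fm : Fin M → EuclideanSpace ℝ (Fin d) → ℝ) (dfm : Fin M → EuclideanSpace ℝ (Fin d) → EuclideanSpace ℝ (Fin d))
    (hsmooth : ∀ m, ∀ᵐ z ∂(D m), SmoothSC L μ (fun x => FM m x z) (fun x => dFM m x z))
    (hfm : ∀ m x, fm m x = ∫ z, FM m x z ∂(D m))
    (hdfm : ∀ m x, dfm m x = ∫ z, dFM m x z ∂(D m))
    (hFjm : ∀ m, Measurable (fun p : EuclideanSpace ℝ (Fin d) × Z => FM m p.1 p.2))
    (hdFjm : ∀ m, Measurable (fun p : EuclideanSpace ℝ (Fin d) × Z => dFM m p.1 p.2))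
    (hFint : ∀ m x, Integrable (fun z => FM m x z) (D m))
    (hdFsq : ∀ m x, Integrable (fun z => ‖dFM m x z‖ ^ 2) (D m))
    (f : EuclideanSpace ℝ (Fin d) → ℝ) (df : EuclideanSpace ℝ (Fin d) → EuclideanSpace ℝ (Fin d))
    (hfdef : ∀ x, f x = (M : ℝ)⁻¹ * ∑ m, fm m x)
    (hdfdef : ∀ x, df x = (M : ℝ)⁻¹ • ∑ m, dfm m x)
    (xstar : EuclideanSpace ℝ (Fin d)) (hmin : ∀ y, f xstar ≤ f y)
    (z : Fin M → Ω → Z) (hz : ∀ m, Measurable (z m))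
    (hindep : iIndepFun z P)
    (hlaw : ∀ m, P.map (z m) = D m)
    (sdif2 : ℝ)
    (hsdif2 : sdif2 = (M : ℝ)⁻¹ * ∑ m, ∫ w, ‖dFM m xstar w‖ ^ 2 ∂(D m))
    (x : Fin M → EuclideanSpace ℝ (Fin d))
    (xhat : EuclideanSpace ℝ (Fin d)) (hxhat : xhat = (M : ℝ)⁻¹ • ∑ m, x m)
    (Vdev : ℝ) (hV : Vdev = (M : ℝ)⁻¹ * ∑ m, ‖x m - xhat‖ ^ 2)
    (γ : ℝ) (hγ : 0 ≤ γ) :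
    ((∫ ω, ‖xhat - γ • ((M : ℝ)⁻¹ • ∑ m, dFM m (x m) (z m ω)) - xstar‖ ^ 2 ∂P) ≤
      (1 - γ * μ) * ‖xhat - xstar‖ ^ 2 + γ * L * (1 + 2 * γ * L) * Vdev -
        2 * γ * (1 - 4 * γ * L) * Breg f df xhat xstar + 4 * γ ^ 2 * sdif2 / M) ∧
    (γ ≤ 1 / (8 * L) →
      (∫ ω, ‖xhat - γ • ((M : ℝ)⁻¹ • ∑ m, dFM m (x m) (z m ω)) - xstar‖ ^ 2 ∂P) ≤
        (1 - γ * μ) * ‖xhat - xstar‖ ^ 2 + 5 / 4 * γ * L * Vdev -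
          γ / 2 * Breg f df xhat xstar + 4 * γ ^ 2 * sdif2 / M) := by
  classical
  have hMpos : (0:ℝ) < M := by
    have : 0 < M := by omega
    exact_mod_cast this
  have hMne : (M:ℝ) ≠ 0 := ne_of_gt hMpos
  -- measurability of sections
  have mdF : ∀ m (p : EuclideanSpace ℝ (Fin d)), Measurable (fun w => dFM m p w) :=
    fun m p => (hdFjm m).comp measurable_prodMk_left
  have mF : ∀ m (p : EuclideanSpace ℝ (Fin d)), Measurable (fun w => FM m p w) :=
    fun m p => (hFjm m).comp measurable_prodMk_left
  -- integrability of gradients over D m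
  have idF : ∀ m p, Integrable (fun w => dFM m p w) (D m) := by
    intro m p
    refine Integrable.mono' ((integrable_const 1).add (hdFsq m p))
      (mdF m p).aestronglyMeasurable ?_
    filter_upwards with w
    have h0 := norm_nonneg (dFM m p w)
    simp only [Pi.add_apply]
    nlinarith [sq_nonneg (‖dFM m p w‖ - 1)]
  -- integral of the Bregman-type expression
  have hBcalc : ∀ m (p q : EuclideanSpace ℝ (Fin d)),
      ∫ w, (FM m p w - FM m q w - ⟪dFM m q w, p - q⟫_ℝ) ∂(D m)
        = fm m p - fm m q - ⟪dfm m q, p - q⟫_ℝ := by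
    intro m p q
    have iInner : Integrable (fun w => ⟪dFM m q w, p - q⟫_ℝ) (D m) := (idF m q).inner_const _
    have hint : ∫ w, ⟪dFM m q w, p - q⟫_ℝ ∂(D m) = ⟪dfm m q, p - q⟫_ℝ := by
      have hc : ∀ w, ⟪dFM m q w, p - q⟫_ℝ = ⟪p - q, dFM m q w⟫_ℝ := fun w => real_inner_comm _ _
      simp_rw [hc]
      rw [integral_inner (idF m q) (p - q), ← hdfm, real_inner_comm]
    have i1 : Integrable (fun w => FM m p w - FM m q w) (D m) := (hFint m p).sub (hFint m q)
    rw [integral_sub i1 iInner, integral_sub (hFint m p) (hFint m q), hint, ← hfm, ← hfm]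
  have hBint : ∀ m (p q : EuclideanSpace ℝ (Fin d)),
      Integrable (fun w => FM m p w - FM m q w - ⟪dFM m q w, p - q⟫_ℝ) (D m) :=
    fun m p q => ((hFint m p).sub (hFint m q)).sub ((idF m q).inner_const _)
  -- each fm is smooth and strongly convex
  have hfmSC : ∀ m, SmoothSC L μ (fm m) (dfm m) := by
    intro m p q
    have hconst : ∀ c : ℝ, ∫ _ : Z, c ∂(D m) = c := by
      intro c; have := hD m; simp
    constructor
    · have h1 : ∫ _ : Z, (μ / 2 * ‖p - q‖ ^ 2) ∂(D m)
          ≤ ∫ w, (FM m p w - FM m q w - ⟪dFM m q w, p - q⟫_ℝ) ∂(D m) := by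
        refine integral_mono_ae (integrable_const _) (hBint m p q) ?_
        filter_upwards [hsmooth m] with w hw using (hw p q).1
      rw [hconst, hBcalc] at h1
      exact h1
    · have h1 : ∫ w, (FM m p w - FM m q w - ⟪dFM m q w, p - q⟫_ℝ) ∂(D m)
          ≤ ∫ _ : Z, (L / 2 * ‖p - q‖ ^ 2) ∂(D m) := by
        refine integral_mono_ae (hBint m p q) (integrable_const _) ?_
        filter_upwards [hsmooth m] with w hw using (hw p q).2
      rw [hconst, hBcalc] at h1
      exact h1
  -- f is smooth and strongly convex
  have hexpf : ∀ p q : EuclideanSpace ℝ (Fin d),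
      f p - f q - ⟪df q, p - q⟫_ℝ
        = (M:ℝ)⁻¹ * ∑ m, (fm m p - fm m q - ⟪dfm m q, p - q⟫_ℝ) := by
    intro p q
    rw [hfdef, hfdef, hdfdef, real_inner_smul_left, sum_inner, ← mul_sub, ← mul_sub,
      ← sum_sub_distrib, ← sum_sub_distrib]
  have hfSC : SmoothSC L μ f df := by
    intro p q
    have hcard : ∀ c : ℝ, (M:ℝ)⁻¹ * ∑ _m : Fin M, c = c := by
      intro c
      rw [Finset.sum_const, card_univ, Fintype.card_fin, nsmul_eq_mul]
      field_simp
    constructor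
    · rw [hexpf]
      calc μ / 2 * ‖p - q‖ ^ 2 = (M:ℝ)⁻¹ * ∑ _m : Fin M, (μ / 2 * ‖p - q‖ ^ 2) := (hcard _).symm
        _ ≤ (M:ℝ)⁻¹ * ∑ m, (fm m p - fm m q - ⟪dfm m q, p - q⟫_ℝ) :=
            mul_le_mul_of_nonneg_left (Finset.sum_le_sum fun m _ => (hfmSC m p q).1)
              (by positivity)
    · rw [hexpf]
      calc (M:ℝ)⁻¹ * ∑ m, (fm m p - fm m q - ⟪dfm m q, p - q⟫_ℝ)
            ≤ (M:ℝ)⁻¹ * ∑ _m : Fin M, (L / 2 * ‖p - q‖ ^ 2) :=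
            mul_le_mul_of_nonneg_left (Finset.sum_le_sum fun m _ => (hfmSC m p q).2)
              (by positivity)
        _ = L / 2 * ‖p - q‖ ^ 2 := hcard _
  have hdfstar : df xstar = 0 := hfSC.grad_min hL hmin
  set Δ := Breg f df xhat xstar with hΔ
  have hΔdef : Δ = f xhat - f xstar := by
    rw [hΔ]; unfold Breg; rw [hdfstar, inner_zero_left]; ring
  have hΔ0 : 0 ≤ Δ := by
    have h1 := (hfSC xhat xstar).1
    have h2 : (0:ℝ) ≤ μ / 2 * ‖xhat - xstar‖ ^ 2 := by positivity
    rw [hΔ]; unfold Breg; linarith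
  have hΔavg : (M:ℝ)⁻¹ * ∑ m, Breg (fm m) (dfm m) xhat xstar = Δ := by
    rw [hΔ]; unfold Breg; exact (hexpf xhat xstar).symm
  have hV0 : 0 ≤ Vdev := by rw [hV]; positivity
  -- sum of deviations is zero
  have hsum0 : ∑ m, (x m - xhat) = 0 := by
    rw [sum_sub_distrib, Finset.sum_const, card_univ, Fintype.card_fin,
      ← Nat.cast_smul_eq_nsmul ℝ, hxhat, smul_smul, mul_inv_cancel₀ hMne, one_smul, sub_self]
  -- Jensen-type identity
  have hJensen : ‖xhat - xstar‖ ^ 2 ≤ (M:ℝ)⁻¹ * ∑ m, ‖x m - xstar‖ ^ 2 := by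
    have hid : ∀ m ∈ (univ : Finset (Fin M)), ‖x m - xstar‖ ^ 2
        = ‖x m - xhat‖ ^ 2 + 2 * ⟪x m - xhat, xhat - xstar⟫_ℝ + ‖xhat - xstar‖ ^ 2 := by
      intro m _
      have h : x m - xstar = (x m - xhat) + (xhat - xstar) := by abel
      rw [h, norm_add_sq_real]
    rw [Finset.sum_congr rfl hid, Finset.sum_add_distrib, Finset.sum_add_distrib]
    have h2 : ∑ m, 2 * ⟪x m - xhat, xhat - xstar⟫_ℝ = 0 := by
      rw [← Finset.mul_sum, ← sum_inner, hsum0, inner_zero_left, mul_zero]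
    have h3 : ∑ _m : Fin M, ‖xhat - xstar‖ ^ 2 = (M:ℝ) * ‖xhat - xstar‖ ^ 2 := by
      rw [Finset.sum_const, card_univ, Fintype.card_fin, nsmul_eq_mul]
    rw [h2, h3]
    have hS1 : 0 ≤ ∑ m, ‖x m - xhat‖ ^ 2 := by positivity
    have heq : (M:ℝ)⁻¹ * (∑ m, ‖x m - xhat‖ ^ 2 + 0 + (M:ℝ) * ‖xhat - xstar‖ ^ 2)
        = (M:ℝ)⁻¹ * ∑ m, ‖x m - xhat‖ ^ 2 + ‖xhat - xstar‖ ^ 2 := by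
      field_simp; ring
    rw [heq]
    have : 0 ≤ (M:ℝ)⁻¹ * ∑ m, ‖x m - xhat‖ ^ 2 := by positivity
    linarith
  -- the deterministic inner product bound
  set gbar := (M:ℝ)⁻¹ • ∑ m, dfm m (x m) with hgbar
  have hip : ⟪xhat - xstar, gbar⟫_ℝ = (M:ℝ)⁻¹ * ∑ m, ⟪dfm m (x m), xhat - xstar⟫_ℝ := by
    rw [hgbar, real_inner_smul_right, inner_sum]
    congr 1
    exact Finset.sum_congr rfl fun m _ => real_inner_comm _ _
  have hF : Δ + μ / 2 * ‖xhat - xstar‖ ^ 2 - L / 2 * Vdev ≤ ⟪xhat - xstar, gbar⟫_ℝ := by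
    have hper : ∀ m ∈ (univ : Finset (Fin M)),
        fm m xhat - fm m xstar - L / 2 * ‖xhat - x m‖ ^ 2 + μ / 2 * ‖xstar - x m‖ ^ 2
          ≤ ⟪dfm m (x m), xhat - xstar⟫_ℝ := by
      intro m _
      have h1 := (hfmSC m xhat (x m)).2
      have h2 := (hfmSC m xstar (x m)).1
      have hsplit : ⟪dfm m (x m), xhat - xstar⟫_ℝ
          = ⟪dfm m (x m), xhat - x m⟫_ℝ - ⟪dfm m (x m), xstar - x m⟫_ℝ := by
        rw [← inner_sub_right]
        congr 1
        abel
      rw [hsplit]; linarith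
    have hsumF := Finset.sum_le_sum hper
    have e1 : (M:ℝ)⁻¹ * ∑ m, (fm m xhat - fm m xstar - L / 2 * ‖xhat - x m‖ ^ 2
          + μ / 2 * ‖xstar - x m‖ ^ 2)
        = (f xhat - f xstar) - L / 2 * Vdev
          + μ / 2 * ((M:ℝ)⁻¹ * ∑ m, ‖x m - xstar‖ ^ 2) := by
      have hn1 : ∀ m : Fin M, ‖xhat - x m‖ = ‖x m - xhat‖ := fun m => norm_sub_rev _ _
      have hn2 : ∀ m : Fin M, ‖xstar - x m‖ = ‖x m - xstar‖ := fun m => norm_sub_rev _ _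
      simp only [hn1, hn2]
      rw [hfdef, hfdef, hV, Finset.sum_add_distrib, sum_sub_distrib, sum_sub_distrib]
      rw [show ∑ m, L / 2 * ‖x m - xhat‖ ^ 2 = L / 2 * ∑ m, ‖x m - xhat‖ ^ 2 from
        (Finset.mul_sum _ _ _).symm]
      rw [show ∑ m, μ / 2 * ‖x m - xstar‖ ^ 2 = μ / 2 * ∑ m, ‖x m - xstar‖ ^ 2 from
        (Finset.mul_sum _ _ _).symm]
      ring
    have hmul := mul_le_mul_of_nonneg_left hsumF (le_of_lt (inv_pos.2 hMpos))
    rw [e1] at hmul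
    have hJ := mul_le_mul_of_nonneg_left hJensen (by positivity : (0:ℝ) ≤ μ / 2)
    rw [hip]
    rw [hΔdef]
    linarith
  -- change of variables helpers
  have EYsq : ∀ m (p : EuclideanSpace ℝ (Fin d)),
      ∫ ω, ‖dFM m p (z m ω)‖ ^ 2 ∂P = ∫ w, ‖dFM m p w‖ ^ 2 ∂(D m) :=
    fun m p => map_integral_eq' P (D m) (z m) (hz m) (hlaw m) _ ((mdF m p).norm.pow_const 2)
  have iYsq : ∀ m (p : EuclideanSpace ℝ (Fin d)),
      Integrable (fun ω => ‖dFM m p (z m ω)‖ ^ 2) P :=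
    fun m p => map_integrable' P (D m) (z m) (hz m) (hlaw m) _ ((mdF m p).norm.pow_const 2)
      (hdFsq m p)
  have iY : ∀ m (p : EuclideanSpace ℝ (Fin d)),
      Integrable (fun ω => dFM m p (z m ω)) P :=
    fun m p => map_integrable' P (D m) (z m) (hz m) (hlaw m) _ (mdF m p) (idF m p)
  have EY : ∀ m (p : EuclideanSpace ℝ (Fin d)),
      ∫ ω, dFM m p (z m ω) ∂P = dfm m p := by
    intro m p
    rw [map_integral_eq' P (D m) (z m) (hz m) (hlaw m) _ (mdF m p), ← hdfm]
  -- average bound machinery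
  have havgbound : ∀ (ψ : Fin M → Z → EuclideanSpace ℝ (Fin d)),
      (∀ m, Measurable (ψ m)) → (∀ m, Integrable (fun w => ‖ψ m w‖ ^ 2) (D m)) →
      Integrable (fun ω => ‖(M:ℝ)⁻¹ • ∑ m, ψ m (z m ω)‖ ^ 2) P ∧
      ∫ ω, ‖(M:ℝ)⁻¹ • ∑ m, ψ m (z m ω)‖ ^ 2 ∂P
        ≤ (M:ℝ)⁻¹ * ∑ m, ∫ w, ‖ψ m w‖ ^ 2 ∂(D m) := by
    intro ψ hmeas hint
    have iψ : ∀ m, Integrable (fun ω => ‖ψ m (z m ω)‖ ^ 2) P := fun m =>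
      map_integrable' P (D m) (z m) (hz m) (hlaw m) _ ((hmeas m).norm.pow_const 2) (hint m)
    have idom : Integrable (fun ω => (M:ℝ)⁻¹ * ∑ m, ‖ψ m (z m ω)‖ ^ 2) P :=
      (integrable_finset_sum _ fun m _ => iψ m).const_mul _
    have hmeasg : Measurable fun ω => (M:ℝ)⁻¹ • ∑ m, ψ m (z m ω) := by
      have : Measurable fun ω => ∑ m, ψ m (z m ω) :=
        Finset.measurable_sum _ fun m _ => (hmeas m).comp (hz m)
      exact this.const_smul ((M:ℝ)⁻¹)
    have hintg : Integrable (fun ω => ‖(M:ℝ)⁻¹ • ∑ m, ψ m (z m ω)‖ ^ 2) P := by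
      refine idom.mono' (hmeasg.norm.pow_const 2).aestronglyMeasurable ?_
      filter_upwards with ω
      rw [Real.norm_eq_abs, abs_of_nonneg (by positivity)]
      exact avg_norm_sq_le' _
    refine ⟨hintg, ?_⟩
    calc ∫ ω, ‖(M:ℝ)⁻¹ • ∑ m, ψ m (z m ω)‖ ^ 2 ∂P
        ≤ ∫ ω, (M:ℝ)⁻¹ * ∑ m, ‖ψ m (z m ω)‖ ^ 2 ∂P :=
          integral_mono hintg idom (fun ω => avg_norm_sq_le' _)
      _ = (M:ℝ)⁻¹ * ∑ m, ∫ w, ‖ψ m w‖ ^ 2 ∂(D m) := by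
          rw [integral_const_mul, integral_finset_sum _ fun m _ => iψ m]
          congr 1
          refine Finset.sum_congr rfl fun m _ => ?_
          exact map_integral_eq' P (D m) (z m) (hz m) (hlaw m) _ ((hmeas m).norm.pow_const 2)
    -- end havgbound
  -- integrability of squared differences over D m
  have isub : ∀ m (p q : EuclideanSpace ℝ (Fin d)),
      Integrable (fun w => ‖dFM m p w - dFM m q w‖ ^ 2) (D m) := by
    intro m p q
    refine Integrable.mono' (((hdFsq m p).add (hdFsq m q)).const_mul 2)
      (((mdF m p).sub (mdF m q)).norm.pow_const 2).aestronglyMeasurable ?_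
    filter_upwards with w
    simp only [Pi.add_apply]
    rw [Real.norm_eq_abs, abs_of_nonneg (by positivity)]
    have := sqnorm_sub_le' (dFM m p w) (dFM m q w)
    linarith
  -- the three pieces
  have h1 := havgbound (fun m w => dFM m (x m) w - dFM m xhat w)
    (fun m => (mdF m (x m)).sub (mdF m xhat)) (fun m => isub m (x m) xhat)
  have h2 := havgbound (fun m w => dFM m xhat w - dFM m xstar w)
    (fun m => (mdF m xhat).sub (mdF m xstar)) (fun m => isub m xhat xstar)
  have h3 := havgbound (fun m w => dFM m xstar w)
    (fun m => mdF m xstar) (fun m => hdFsq m xstar)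
  have hG := havgbound (fun m w => dFM m (x m) w)
    (fun m => mdF m (x m)) (fun m => hdFsq m (x m))
  -- per-m bounds
  have b1 : ∀ m, ∫ w, ‖dFM m (x m) w - dFM m xhat w‖ ^ 2 ∂(D m) ≤ L ^ 2 * ‖x m - xhat‖ ^ 2 := by
    intro m
    have hmono : ∫ w, ‖dFM m (x m) w - dFM m xhat w‖ ^ 2 ∂(D m)
        ≤ ∫ _ : Z, (L ^ 2 * ‖x m - xhat‖ ^ 2) ∂(D m) := by
      refine integral_mono_ae (isub m (x m) xhat) (integrable_const _) ?_
      filter_upwards [hsmooth m] with w hw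
      exact hw.lip_sq hL hμ (x m) xhat
    have := hD m
    simpa using hmono
  have b2 : ∀ m, ∫ w, ‖dFM m xhat w - dFM m xstar w‖ ^ 2 ∂(D m)
      ≤ 2 * L * Breg (fm m) (dfm m) xhat xstar := by
    intro m
    have hmono : ∫ w, ‖dFM m xhat w - dFM m xstar w‖ ^ 2 ∂(D m)
        ≤ ∫ w, 2 * L * (FM m xhat w - FM m xstar w - ⟪dFM m xstar w, xhat - xstar⟫_ℝ) ∂(D m) := by
      refine integral_mono_ae (isub m xhat xstar) ((hBint m xhat xstar).const_mul _) ?_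
      filter_upwards [hsmooth m] with w hw
      exact hw.coco hL hμ xhat xstar
    rw [integral_const_mul, hBcalc] at hmono
    exact hmono
  -- the independence bound for the noise term
  have hμsum : ∑ m, dfm m xstar = 0 := by
    have h := hdfdef xstar
    rw [hdfstar] at h
    rcases smul_eq_zero.mp h.symm with hc | hs
    · exact absurd hc (inv_ne_zero hMne)
    · exact hs
  have iWmul : ∀ m k : Fin M, Integrable
      (fun ω => ⟪dFM m xstar (z m ω), dFM k xstar (z k ω)⟫_ℝ) P := by
    intro m k
    have hdom : Integrable
        (fun ω => 1/2 * (‖dFM m xstar (z m ω)‖ ^ 2 + ‖dFM k xstar (z k ω)‖ ^ 2)) P :=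
      ((iYsq m xstar).add (iYsq k xstar)).const_mul (1/2)
    have hmeas : Measurable
        (fun ω => ⟪dFM m xstar (z m ω), dFM k xstar (z k ω)⟫_ℝ) :=
      Measurable.inner (𝕜 := ℝ) ((mdF m xstar).comp (hz m)) ((mdF k xstar).comp (hz k))
    refine Integrable.mono' hdom hmeas.aestronglyMeasurable ?_
    filter_upwards with ω
    have hcs := abs_real_inner_le_norm (dFM m xstar (z m ω)) (dFM k xstar (z k ω))
    rw [Real.norm_eq_abs]
    nlinarith [sq_nonneg (‖dFM m xstar (z m ω)‖ - ‖dFM k xstar (z k ω)‖),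
      norm_nonneg (dFM m xstar (z m ω)), norm_nonneg (dFM k xstar (z k ω))]
  have hcross : ∀ m k : Fin M, m ≠ k →
      ∫ ω, ⟪dFM m xstar (z m ω), dFM k xstar (z k ω)⟫_ℝ ∂P
        = ⟪dfm m xstar, dfm k xstar⟫_ℝ := by
    intro m k hmk
    have hinner : ∀ ω, ⟪dFM m xstar (z m ω), dFM k xstar (z k ω)⟫_ℝ
        = ∑ i, dFM m xstar (z m ω) i * dFM k xstar (z k ω) i := by
      intro ω
      simp [PiLp.inner_apply, RCLike.inner_apply, conj_trivial]
      exact Finset.sum_congr rfl fun _ _ => mul_comm _ _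
    have hcoordmul : ∀ i : Fin d, Integrable
        (fun ω => dFM m xstar (z m ω) i * dFM k xstar (z k ω) i) P := by
      intro i
      have hdom : Integrable
          (fun ω => 1/2 * (‖dFM m xstar (z m ω)‖ ^ 2 + ‖dFM k xstar (z k ω)‖ ^ 2)) P :=
        ((iYsq m xstar).add (iYsq k xstar)).const_mul (1/2)
      refine Integrable.mono' hdom
        (((((measurable_pi_apply i).comp (WithLp.measurable_ofLp 2 _)).comp (mdF m xstar)).comp (hz m)).mul
          ((((measurable_pi_apply i).comp (WithLp.measurable_ofLp 2 _)).comp (mdF k xstar)).comp (hz k))).aestronglyMeasurable ?_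
      filter_upwards with ω
      rw [Real.norm_eq_abs, abs_mul]
      have ha := coord_abs_le_norm' (dFM m xstar (z m ω)) i
      have hb := coord_abs_le_norm' (dFM k xstar (z k ω)) i
      have h0a := abs_nonneg (dFM m xstar (z m ω) i)
      have h0b := abs_nonneg (dFM k xstar (z k ω) i)
      nlinarith [sq_nonneg (‖dFM m xstar (z m ω)‖ - ‖dFM k xstar (z k ω)‖),
        norm_nonneg (dFM m xstar (z m ω)), norm_nonneg (dFM k xstar (z k ω)),
        sq_nonneg (|dFM m xstar (z m ω) i| - |dFM k xstar (z k ω) i|)]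
    have hcoord : ∀ (j : Fin M) (i : Fin d),
        ∫ ω, dFM j xstar (z j ω) i ∂P = dfm j xstar i := by
      intro j i
      have h := (EuclideanSpace.proj (𝕜 := ℝ) i).integral_comp_comm (iY j xstar)
      have h2 : ∫ ω, dFM j xstar (z j ω) i ∂P
          = EuclideanSpace.proj (𝕜 := ℝ) i (∫ ω, dFM j xstar (z j ω) ∂P) := h
      rw [h2, EY]
      rfl
    have hindmk : ∀ i : Fin d, IndepFun (fun ω => dFM m xstar (z m ω) i)
        (fun ω => dFM k xstar (z k ω) i) P := by
      intro i
      exact (hindep.indepFun hmk).comp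
        (((measurable_pi_apply i).comp (WithLp.measurable_ofLp 2 _)).comp (mdF m xstar))
        (((measurable_pi_apply i).comp (WithLp.measurable_ofLp 2 _)).comp (mdF k xstar))
    have hprod : ∀ i : Fin d, ∫ ω, dFM m xstar (z m ω) i * dFM k xstar (z k ω) i ∂P
        = (dfm m xstar i) * (dfm k xstar i) := by
      intro i
      have h := (hindmk i).integral_mul_eq_mul_integral
        (((((measurable_pi_apply i).comp (WithLp.measurable_ofLp 2 _)).comp (mdF m xstar)).comp (hz m)).aestronglyMeasurable)
        (((((measurable_pi_apply i).comp (WithLp.measurable_ofLp 2 _)).comp (mdF k xstar)).comp (hz k)).aestronglyMeasurable)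
      have h2 : ∫ ω, dFM m xstar (z m ω) i * dFM k xstar (z k ω) i ∂P
          = (∫ ω, dFM m xstar (z m ω) i ∂P) * ∫ ω, dFM k xstar (z k ω) i ∂P := h
      rw [h2, hcoord m i, hcoord k i]
    simp_rw [hinner]
    rw [integral_finset_sum _ fun i _ => hcoordmul i]
    simp_rw [hprod]
    simp [PiLp.inner_apply, RCLike.inner_apply, conj_trivial]
    exact Finset.sum_congr rfl fun _ _ => mul_comm _ _
  have hdiag : ∀ m : Fin M, ∫ ω, ⟪dFM m xstar (z m ω), dFM m xstar (z m ω)⟫_ℝ ∂P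
      = ∫ w, ‖dFM m xstar w‖ ^ 2 ∂(D m) := by
    intro m
    have : ∀ ω, ⟪dFM m xstar (z m ω), dFM m xstar (z m ω)⟫_ℝ = ‖dFM m xstar (z m ω)‖ ^ 2 :=
      fun ω => real_inner_self_eq_norm_sq _
    simp_rw [this]
    exact EYsq m xstar
  have hnoise : ∫ ω, ‖(M:ℝ)⁻¹ • ∑ m, dFM m xstar (z m ω)‖ ^ 2 ∂P ≤ sdif2 / M := by
    have hWexp : ∀ ω, ‖(M:ℝ)⁻¹ • ∑ m, dFM m xstar (z m ω)‖ ^ 2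
        = (M:ℝ)⁻¹ ^ 2 * ∑ m, ∑ k, ⟪dFM m xstar (z m ω), dFM k xstar (z k ω)⟫_ℝ := by
      intro ω
      rw [norm_smul, Real.norm_eq_abs, abs_of_nonneg (inv_nonneg.2 hMpos.le), mul_pow]
      congr 1
      rw [← real_inner_self_eq_norm_sq, sum_inner]
      exact Finset.sum_congr rfl fun m _ => inner_sum _ _ _
    simp_rw [hWexp]
    rw [integral_const_mul, integral_finset_sum _ fun m _ =>
      integrable_finset_sum _ fun k _ => iWmul m k]
    have hsum_eq : ∀ m ∈ (univ : Finset (Fin M)),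
        ∫ ω, ∑ k, ⟪dFM m xstar (z m ω), dFM k xstar (z k ω)⟫_ℝ ∂P
          = ∑ k, ∫ ω, ⟪dFM m xstar (z m ω), dFM k xstar (z k ω)⟫_ℝ ∂P :=
      fun m _ => integral_finset_sum _ fun k _ => iWmul m k
    rw [Finset.sum_congr rfl hsum_eq]
    -- now bound the double sum
    have hsplit : ∀ m k : Fin M,
        ∫ ω, ⟪dFM m xstar (z m ω), dFM k xstar (z k ω)⟫_ℝ ∂P
          = ⟪dfm m xstar, dfm k xstar⟫_ℝ
            + (if m = k then (∫ w, ‖dFM m xstar w‖ ^ 2 ∂(D m)) - ‖dfm m xstar‖ ^ 2 else 0) := by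
      intro m k
      by_cases hmk : m = k
      · subst hmk
        rw [hdiag m, if_pos rfl, real_inner_self_eq_norm_sq]
        ring
      · rw [hcross m k hmk, if_neg hmk, add_zero]
    simp_rw [hsplit]
    have hsum1 : ∑ m, ∑ k, (⟪dfm m xstar, dfm k xstar⟫_ℝ
        + (if m = k then (∫ w, ‖dFM m xstar w‖ ^ 2 ∂(D m)) - ‖dfm m xstar‖ ^ 2 else 0))
        = (∑ m, ∑ k, ⟪dfm m xstar, dfm k xstar⟫_ℝ)
          + ∑ m, ((∫ w, ‖dFM m xstar w‖ ^ 2 ∂(D m)) - ‖dfm m xstar‖ ^ 2) := by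
      simp [Finset.sum_add_distrib, Finset.sum_ite_eq]
    rw [hsum1]
    have hz1 : ∑ m, ∑ k, ⟪dfm m xstar, dfm k xstar⟫_ℝ = 0 := by
      have he : ∑ m, ∑ k, ⟪dfm m xstar, dfm k xstar⟫_ℝ
          = ⟪∑ m, dfm m xstar, ∑ k, dfm k xstar⟫_ℝ := by
        rw [sum_inner]
        exact Finset.sum_congr rfl fun m _ => (inner_sum _ _ _).symm
      rw [he, hμsum, inner_zero_left]
    rw [hz1, zero_add]
    have hle : ∑ m, ((∫ w, ‖dFM m xstar w‖ ^ 2 ∂(D m)) - ‖dfm m xstar‖ ^ 2)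
        ≤ ∑ m, ∫ w, ‖dFM m xstar w‖ ^ 2 ∂(D m) := by
      refine Finset.sum_le_sum fun m _ => ?_
      have := sq_nonneg ‖dfm m xstar‖
      linarith
    have hid : sdif2 / (M:ℝ) = (M:ℝ)⁻¹ ^ 2 * ∑ m, ∫ w, ‖dFM m xstar w‖ ^ 2 ∂(D m) := by
      rw [hsdif2, div_eq_mul_inv]; ring
    rw [hid]
    exact mul_le_mul_of_nonneg_left hle (by positivity)
  -- beta-reduce the piece statements
  beta_reduce at h1 h2 h3 hG
  -- pointwise decomposition of the gradient estimator
  have hdecomp : ∀ ω, (M:ℝ)⁻¹ • ∑ m, dFM m (x m) (z m ω)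
      = ((M:ℝ)⁻¹ • ∑ m, (dFM m (x m) (z m ω) - dFM m xhat (z m ω)))
        + ((M:ℝ)⁻¹ • ∑ m, (dFM m xhat (z m ω) - dFM m xstar (z m ω)))
        + ((M:ℝ)⁻¹ • ∑ m, dFM m xstar (z m ω)) := by
    intro ω
    rw [← smul_add, ← smul_add, ← Finset.sum_add_distrib, ← Finset.sum_add_distrib]
    congr 1
    refine Finset.sum_congr rfl fun m _ => ?_
    abel
  have hptw : ∀ ω, ‖(M:ℝ)⁻¹ • ∑ m, dFM m (x m) (z m ω)‖ ^ 2
      ≤ 2 * ‖(M:ℝ)⁻¹ • ∑ m, (dFM m (x m) (z m ω) - dFM m xhat (z m ω))‖ ^ 2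
        + 4 * ‖(M:ℝ)⁻¹ • ∑ m, (dFM m xhat (z m ω) - dFM m xstar (z m ω))‖ ^ 2
        + 4 * ‖(M:ℝ)⁻¹ • ∑ m, dFM m xstar (z m ω)‖ ^ 2 := by
    intro ω
    set A := (M:ℝ)⁻¹ • ∑ m, (dFM m (x m) (z m ω) - dFM m xhat (z m ω)) with hA
    set B := (M:ℝ)⁻¹ • ∑ m, (dFM m xhat (z m ω) - dFM m xstar (z m ω)) with hB
    set C := (M:ℝ)⁻¹ • ∑ m, dFM m xstar (z m ω) with hC
    rw [hdecomp ω]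
    have htr : ‖A + B + C‖ ≤ ‖A‖ + ‖B‖ + ‖C‖ := norm_add₃_le
    nlinarith [sq_nonneg (‖A‖ - ‖B‖ - ‖C‖), sq_nonneg (‖B‖ - ‖C‖), norm_nonneg A,
      norm_nonneg B, norm_nonneg C, norm_nonneg (A + B + C)]
  -- bound the second moment
  have c1 : ∫ ω, ‖(M:ℝ)⁻¹ • ∑ m, (dFM m (x m) (z m ω) - dFM m xhat (z m ω))‖ ^ 2 ∂P
      ≤ L ^ 2 * Vdev := by
    refine le_trans h1.2 ?_
    have hs : (M:ℝ)⁻¹ * ∑ m, ∫ w, ‖dFM m (x m) w - dFM m xhat w‖ ^ 2 ∂(D m)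
        ≤ (M:ℝ)⁻¹ * ∑ m, L ^ 2 * ‖x m - xhat‖ ^ 2 :=
      mul_le_mul_of_nonneg_left (Finset.sum_le_sum fun m _ => b1 m) (by positivity)
    refine le_trans hs (le_of_eq ?_)
    rw [hV, show ∑ m, L ^ 2 * ‖x m - xhat‖ ^ 2 = L ^ 2 * ∑ m, ‖x m - xhat‖ ^ 2 from
      (Finset.mul_sum _ _ _).symm]
    ring
  have c2 : ∫ ω, ‖(M:ℝ)⁻¹ • ∑ m, (dFM m xhat (z m ω) - dFM m xstar (z m ω))‖ ^ 2 ∂P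
      ≤ 2 * L * Δ := by
    refine le_trans h2.2 ?_
    have hs : (M:ℝ)⁻¹ * ∑ m, ∫ w, ‖dFM m xhat w - dFM m xstar w‖ ^ 2 ∂(D m)
        ≤ (M:ℝ)⁻¹ * ∑ m, 2 * L * Breg (fm m) (dfm m) xhat xstar :=
      mul_le_mul_of_nonneg_left (Finset.sum_le_sum fun m _ => b2 m) (by positivity)
    refine le_trans hs (le_of_eq ?_)
    rw [show ∑ m, 2 * L * Breg (fm m) (dfm m) xhat xstar
      = 2 * L * ∑ m, Breg (fm m) (dfm m) xhat xstar from (Finset.mul_sum _ _ _).symm,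
      ← hΔavg]
    ring
  have hIG : ∫ ω, ‖(M:ℝ)⁻¹ • ∑ m, dFM m (x m) (z m ω)‖ ^ 2 ∂P
      ≤ 2 * (L ^ 2 * Vdev) + 8 * L * Δ + 4 * (sdif2 / M) := by
    have j1 : Integrable (fun ω =>
        2 * ‖(M:ℝ)⁻¹ • ∑ m, (dFM m (x m) (z m ω) - dFM m xhat (z m ω))‖ ^ 2) P :=
      h1.1.const_mul 2
    have j2 : Integrable (fun ω =>
        4 * ‖(M:ℝ)⁻¹ • ∑ m, (dFM m xhat (z m ω) - dFM m xstar (z m ω))‖ ^ 2) P :=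
      h2.1.const_mul 4
    have j3 : Integrable (fun ω => 4 * ‖(M:ℝ)⁻¹ • ∑ m, dFM m xstar (z m ω)‖ ^ 2) P :=
      h3.1.const_mul 4
    have j12 : Integrable (fun ω =>
        2 * ‖(M:ℝ)⁻¹ • ∑ m, (dFM m (x m) (z m ω) - dFM m xhat (z m ω))‖ ^ 2
        + 4 * ‖(M:ℝ)⁻¹ • ∑ m, (dFM m xhat (z m ω) - dFM m xstar (z m ω))‖ ^ 2) P :=
      j1.add j2
    have jall : Integrable (fun ω =>
        2 * ‖(M:ℝ)⁻¹ • ∑ m, (dFM m (x m) (z m ω) - dFM m xhat (z m ω))‖ ^ 2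
        + 4 * ‖(M:ℝ)⁻¹ • ∑ m, (dFM m xhat (z m ω) - dFM m xstar (z m ω))‖ ^ 2
        + 4 * ‖(M:ℝ)⁻¹ • ∑ m, dFM m xstar (z m ω)‖ ^ 2) P := j12.add j3
    have hmono : ∫ ω, ‖(M:ℝ)⁻¹ • ∑ m, dFM m (x m) (z m ω)‖ ^ 2 ∂P
        ≤ ∫ ω, (2 * ‖(M:ℝ)⁻¹ • ∑ m, (dFM m (x m) (z m ω) - dFM m xhat (z m ω))‖ ^ 2
          + 4 * ‖(M:ℝ)⁻¹ • ∑ m, (dFM m xhat (z m ω) - dFM m xstar (z m ω))‖ ^ 2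
          + 4 * ‖(M:ℝ)⁻¹ • ∑ m, dFM m xstar (z m ω)‖ ^ 2) ∂P :=
      integral_mono hG.1 jall hptw
    rw [integral_add j12 j3, integral_add j1 j2, integral_const_mul,
      integral_const_mul, integral_const_mul] at hmono
    have := hnoise
    linarith [c1, c2, hnoise, hmono]
  -- expansion of the square
  have hintegrand : ∀ ω, ‖xhat - γ • ((M:ℝ)⁻¹ • ∑ m, dFM m (x m) (z m ω)) - xstar‖ ^ 2
      = ‖xhat - xstar‖ ^ 2
        - 2 * γ * ⟪xhat - xstar, (M:ℝ)⁻¹ • ∑ m, dFM m (x m) (z m ω)⟫_ℝ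
        + γ ^ 2 * ‖(M:ℝ)⁻¹ • ∑ m, dFM m (x m) (z m ω)‖ ^ 2 := by
    intro ω
    set w := (M:ℝ)⁻¹ • ∑ m, dFM m (x m) (z m ω) with hw
    rw [show xhat - γ • w - xstar = (xhat - xstar) - γ • w from by abel, norm_sub_sq_real,
      real_inner_smul_right, norm_smul, Real.norm_eq_abs, mul_pow, sq_abs]
    ring
  have ig : Integrable (fun ω => (M:ℝ)⁻¹ • ∑ m, dFM m (x m) (z m ω)) P :=
    Integrable.smul ((M:ℝ)⁻¹)
      (integrable_finset_sum (univ : Finset (Fin M)) fun m _ => iY m (x m))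
  have iinner : Integrable
      (fun ω => ⟪xhat - xstar, (M:ℝ)⁻¹ • ∑ m, dFM m (x m) (z m ω)⟫_ℝ) P :=
    ig.const_inner _
  have hEg : ∫ ω, (M:ℝ)⁻¹ • ∑ m, dFM m (x m) (z m ω) ∂P = gbar := by
    rw [integral_smul, integral_finset_sum _ fun m _ => iY m (x m), hgbar]
    congr 1
    exact Finset.sum_congr rfl fun m _ => EY m (x m)
  have hexpand : ∫ ω, ‖xhat - γ • ((M:ℝ)⁻¹ • ∑ m, dFM m (x m) (z m ω)) - xstar‖ ^ 2 ∂P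
      = ‖xhat - xstar‖ ^ 2 - 2 * γ * ⟪xhat - xstar, gbar⟫_ℝ
        + γ ^ 2 * ∫ ω, ‖(M:ℝ)⁻¹ • ∑ m, dFM m (x m) (z m ω)‖ ^ 2 ∂P := by
    simp_rw [hintegrand]
    have k2 : Integrable (fun ω =>
        2 * γ * ⟪xhat - xstar, (M:ℝ)⁻¹ • ∑ m, dFM m (x m) (z m ω)⟫_ℝ) P :=
      iinner.const_mul _
    have k1 : Integrable (fun ω => ‖xhat - xstar‖ ^ 2
        - 2 * γ * ⟪xhat - xstar, (M:ℝ)⁻¹ • ∑ m, dFM m (x m) (z m ω)⟫_ℝ) P :=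
      (integrable_const _).sub k2
    have k3 : Integrable (fun ω =>
        γ ^ 2 * ‖(M:ℝ)⁻¹ • ∑ m, dFM m (x m) (z m ω)‖ ^ 2) P := hG.1.const_mul _
    rw [integral_add k1 k3, integral_sub (integrable_const _) k2, integral_const_mul,
      integral_const_mul, integral_inner ig, hEg]
    simp
  -- conclusion, part 1
  have hpart1 : ∫ ω, ‖xhat - γ • ((M:ℝ)⁻¹ • ∑ m, dFM m (x m) (z m ω)) - xstar‖ ^ 2 ∂P
      ≤ (1 - γ * μ) * ‖xhat - xstar‖ ^ 2 + γ * L * (1 + 2 * γ * L) * Vdev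
        - 2 * γ * (1 - 4 * γ * L) * Δ + 4 * γ ^ 2 * sdif2 / M := by
    rw [hexpand]
    have k1 := mul_le_mul_of_nonneg_left hF (by linarith : (0:ℝ) ≤ 2 * γ)
    have k2 := mul_le_mul_of_nonneg_left hIG (sq_nonneg γ)
    have e : 4 * γ ^ 2 * sdif2 / (M:ℝ) = γ ^ 2 * (4 * (sdif2 / (M:ℝ))) := by ring
    rw [e]
    linarith [k1, k2]
  refine ⟨hpart1, fun h8 => ?_⟩
  have hγL : γ * L ≤ 1 / 8 := by
    rw [le_div_iff₀ (by positivity : (0:ℝ) < 8 * L)] at h8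
    linarith
  have p1 : (0:ℝ) ≤ (1/4 - 2 * (γ * L)) * (γ * L * Vdev) :=
    mul_nonneg (by linarith) (mul_nonneg (mul_nonneg hγ hL.le) hV0)
  have p2 : (0:ℝ) ≤ (3/2 - 8 * (γ * L)) * (γ * Δ) :=
    mul_nonneg (by linarith) (mul_nonneg hγ hΔ0)
  nlinarith [hpart1, p1, p2]
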